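/- Let n ≥ 1 be an integer, set β = β̂_{n+1/2} and ã_n = ((n+1/2)² − β̂_{n+1/2})/(2n+1). Then the set of C² solutions (x,y): ℝ → ℝ² of the system (E_{β̂_{n+1/2}}) satisfying the anti-periodicity condition x(t+2π) = −x(t), y(t+2π) = −y(t) for all t is exactly the real linear span of the two solutions t ↦ (ã_n sin((n+1/2)t), cos((n+1/2)t)) and t ↦ (ã_n cos((n+1/2)t), −sin((n+1/2)t)). -/

import Mathlib

open Real Set

noncomputable section EulerAuxSection
namespace EulerAux

/-! Auxiliary machinery for the Euler system at eccentricity `e = 0`. -/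

def eulerL (β : ℝ) : ((ℝ×ℝ)×(ℝ×ℝ)) →L[ℝ] ((ℝ×ℝ)×(ℝ×ℝ)) :=
  LinearMap.toContinuousLinearMap
  { toFun := fun p => (p.2, ((2*β+3)*p.1.1 + 2*p.2.2, -β*p.1.2 - 2*p.2.1))
    map_add' := by intro p q; simp [Prod.ext_iff]; constructor <;> ring
    map_smul' := by intro c p; simp [Prod.ext_iff, smul_eq_mul]; constructor <;> ring }

lemma eulerL_apply (β : ℝ) (p : (ℝ×ℝ)×(ℝ×ℝ)) :
    eulerL β p = (p.2, ((2*β+3)*p.1.1 + 2*p.2.2, -β*p.1.2 - 2*p.2.1)) := rfl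

lemma ODE_unique_global {E : Type*} [NormedAddCommGroup E] [NormedSpace ℝ E] {K : NNReal}
    {v : E → E} (hv : LipschitzWith K v) {f g : ℝ → E}
    (hf : ∀ t, HasDerivAt f (v (f t)) t) (hg : ∀ t, HasDerivAt g (v (g t)) t)
    (h0 : f 0 = g 0) (t : ℝ) : f t = g t := by
  have h := ODE_solution_unique_of_mem_Icc (v := fun _ => v) (s := fun _ => univ) (K := K)
    (fun _ _ => hv.lipschitzOnWith) (t₀ := 0) (a := -(|t|+1)) (b := |t|+1)
    (by constructor <;> [nlinarith [abs_nonneg t]; nlinarith [abs_nonneg t]])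
    (continuousOn_of_forall_continuousAt fun s _ => (hf s).continuousAt)
    (fun s _ => hf s) (fun _ _ => trivial)
    (continuousOn_of_forall_continuousAt fun s _ => (hg s).continuousAt)
    (fun s _ => hg s) (fun _ _ => trivial) h0
  exact h ⟨by nlinarith [neg_abs_le t], by nlinarith [le_abs_self t]⟩

lemma hd_sinm (ω t : ℝ) : HasDerivAt (fun s => Real.sin (ω*s)) (ω * Real.cos (ω*t)) t := by
  simpa [mul_comm, Function.comp_def] using (Real.hasDerivAt_sin (ω*t)).comp t ((hasDerivAt_id t).const_mul ω)

lemma hd_cosm (ω t : ℝ) : HasDerivAt (fun s => Real.cos (ω*s)) (-(ω * Real.sin (ω*t))) t := by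
  simpa [mul_comm, Function.comp_def] using (Real.hasDerivAt_cos (ω*t)).comp t ((hasDerivAt_id t).const_mul ω)

lemma hd_expm (c t : ℝ) : HasDerivAt (fun s => Real.exp (c*s)) (c * Real.exp (c*t)) t := by
  simpa [mul_comm, Function.comp_def] using (Real.hasDerivAt_exp (c*t)).comp t ((hasDerivAt_id t).const_mul c)

/-- trigonometric solution 1 as a first-order curve -/
def U1 (a ω : ℝ) (t : ℝ) : (ℝ×ℝ)×(ℝ×ℝ) :=
  ((a * Real.sin (ω*t), Real.cos (ω*t)), (a*ω * Real.cos (ω*t), -(ω * Real.sin (ω*t))))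

/-- trigonometric solution 2 as a first-order curve -/
def U2 (a ω : ℝ) (t : ℝ) : (ℝ×ℝ)×(ℝ×ℝ) :=
  ((a * Real.cos (ω*t), -Real.sin (ω*t)), (-(a*ω * Real.sin (ω*t)), -(ω * Real.cos (ω*t))))

/-- exponential solution as a first-order curve -/
def UE (A B c : ℝ) (t : ℝ) : (ℝ×ℝ)×(ℝ×ℝ) :=
  ((A * Real.exp (c*t), B * Real.exp (c*t)), (A*c * Real.exp (c*t), B*c * Real.exp (c*t)))

lemma hd_U1 {β a ω : ℝ} (h1 : a*(ω^2+2*β+3) = 2*ω) (h2 : ω^2 = β + 2*a*ω) (t : ℝ) :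
    HasDerivAt (U1 a ω) (eulerL β (U1 a ω t)) t := by
  have hx := ((hd_sinm ω t).const_mul a)
  have hy := hd_cosm ω t
  have hx' := ((hd_cosm ω t).const_mul (a*ω))
  have hy' := ((hd_sinm ω t).const_mul ω).neg
  have h := (hx.prodMk hy).prodMk (hx'.prodMk hy')
  convert h using 1
  · rfl
  rw [eulerL_apply]
  simp only [U1, Prod.mk.injEq]
  refine ⟨⟨by ring, trivial⟩, ?_, ?_⟩
  · linear_combination Real.sin (ω*t) * h1
  · linear_combination Real.cos (ω*t) * h2

lemma hd_U2 {β a ω : ℝ} (h1 : a*(ω^2+2*β+3) = 2*ω) (h2 : ω^2 = β + 2*a*ω) (t : ℝ) :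
    HasDerivAt (U2 a ω) (eulerL β (U2 a ω t)) t := by
  have hx := ((hd_cosm ω t).const_mul a)
  have hy := (hd_sinm ω t).neg
  have hx' := (((hd_sinm ω t).const_mul (a*ω)).neg)
  have hy' := ((hd_cosm ω t).const_mul ω).neg
  have h := (hx.prodMk hy).prodMk (hx'.prodMk hy')
  convert h using 1
  · rfl
  rw [eulerL_apply]
  simp only [U2, Prod.mk.injEq]
  refine ⟨⟨by ring, trivial⟩, ?_, ?_⟩
  · linear_combination Real.cos (ω*t) * h1
  · linear_combination (-Real.sin (ω*t)) * h2

lemma hd_UE {β A B c : ℝ} (hx : A*c^2 = (2*β+3)*A + 2*(B*c)) (hy : B*c^2 = -β*B - 2*(A*c)) (t : ℝ) :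
    HasDerivAt (UE A B c) (eulerL β (UE A B c t)) t := by
  have h1 := ((hd_expm c t).const_mul A)
  have h2 := ((hd_expm c t).const_mul B)
  have h3 := ((hd_expm c t).const_mul (A*c))
  have h4 := ((hd_expm c t).const_mul (B*c))
  have h := (h1.prodMk h2).prodMk (h3.prodMk h4)
  convert h using 1
  · rfl
  rw [eulerL_apply]
  simp only [UE, Prod.mk.injEq]
  refine ⟨⟨by ring, by ring⟩, ?_, ?_⟩
  · linear_combination (-Real.exp (c*t)) * hx
  · linear_combination (-Real.exp (c*t)) * hy

lemma hd_fst {F G : Type*} [NormedAddCommGroup F] [NormedSpace ℝ F] [NormedAddCommGroup G]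
    [NormedSpace ℝ G] {f : ℝ → F × G} {p : F × G} {t : ℝ} (h : HasDerivAt f p t) :
    HasDerivAt (fun t => (f t).1) p.1 t := by
  simpa [Function.comp_def] using (hasFDerivAt_fst (𝕜 := ℝ) (p := f t)).comp_hasDerivAt t h

lemma hd_snd {F G : Type*} [NormedAddCommGroup F] [NormedSpace ℝ F] [NormedAddCommGroup G]
    [NormedSpace ℝ G] {f : ℝ → F × G} {p : F × G} {t : ℝ} (h : HasDerivAt f p t) :
    HasDerivAt (fun t => (f t).2) p.2 t := by
  simpa [Function.comp_def] using (hasFDerivAt_snd (𝕜 := ℝ) (p := f t)).comp_hasDerivAt t h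

lemma aux_D (ω : ℝ) (h : 3/2 ≤ ω) : 0 ≤ 9*ω^4 - 14*ω^2 + 9 := by
  nlinarith [sq_nonneg (3*ω^2 - 7/3)]

lemma aux_sq (ω : ℝ) (h : 3/2 ≤ ω) : 9/4 ≤ ω^2 := by nlinarith

lemma aux_sq25 (x : ℝ) (h : 2 ≤ x) : 25/4 ≤ (x + 1/2)^2 := by nlinarith

lemma aux_beta_pos (ω s β : ℝ) (hωge : 3/2 ≤ ω) (hs0 : 0 ≤ s)
    (hs2 : s^2 = 9*ω^4 - 14*ω^2 + 9) (hβs : β = (ω^2 - 3 + s)/4) : 0 < β := by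
  nlinarith [hs2, hs0, hωge, sq_nonneg (s + 3 - ω^2)]

lemma aux_delta2_pos (ω β a q : ℝ) (hωge : 3/2 ≤ ω)
    (key : 2*ω*(a*q+2*ω) = (ω^2-β-2)^2 + 4*ω^2 - 4) : 0 < a*q + 2*ω := by
  have h5 : 0 < 2*ω*(a*q+2*ω) := by rw [key]; nlinarith [sq_nonneg (ω^2-β-2), hωge]
  nlinarith [h5, hωge]

lemma aux_n1 (s : ℝ) (hs0 : 0 ≤ s) (hs2 : s^2 = 9*(3/2:ℝ)^4 - 14*(3/2:ℝ)^2 + 9)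
    (hcon : (8*(3/2:ℝ)^2 - 4 - ((3*(3/2:ℝ)^2+3-s)/4)^2)/2 = 0) : False := by
  norm_num at hs2 hcon
  nlinarith [hs0, hs2, hcon]

lemma aux_n2 (ω s : ℝ) (hu : (25/4:ℝ) ≤ ω^2) (hs0 : 0 ≤ s)
    (hs2 : s^2 = 9*ω^4 - 14*ω^2 + 9)
    (hcon : (8*ω^2 - 4 - ((3*ω^2+3-s)/4)^2)/2 = 0) : False := by
  have heq : (3*ω^2+3-s)^2 = 128*ω^2 - 64 := by linear_combination (-32)*hcon
  have e1 : (6*ω^2+6)*s = 18*ω^4 - 124*ω^2 + 82 := by linear_combination hs2 - heq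
  have e2 : ((6*ω^2+6)*s)^2 = (18*ω^4-124*ω^2+82)^2 := by rw [e1]
  have e3 : (6*ω^2+6)^2*(9*ω^4-14*ω^2+9) = (18*ω^4-124*ω^2+82)^2 := by
    linear_combination e2 - (6*ω^2+6)^2*hs2
  have hu' : 0 ≤ ω^2 - 25/4 := by linarith
  nlinarith [e3, hu', sq_nonneg (ω^2 - 25/4),
    mul_nonneg (mul_nonneg hu' hu') hu', mul_nonneg hu' (sq_nonneg ω),
    mul_nonneg (mul_nonneg hu' hu') (sq_nonneg ω)]

end EulerAux
end EulerAuxSection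

open EulerAux in
set_option maxHeartbeats 2000000 in
/-- At `β = β̂_{n+1/2}` (`n ≥ 1`), the `2π`-anti-periodic solutions of the Euler system at
`e = 0` are exactly the span of `t ↦ (ãₙ sin((n+1/2)t), cos((n+1/2)t))` and
`t ↦ (ãₙ cos((n+1/2)t), −sin((n+1/2)t))`, with `ãₙ = ((n+1/2)² − β̂_{n+1/2})/(2n+1)`. -/
theorem euler_antiperiodic_kernel (n : ℕ) (hn : 1 ≤ n) (β a : ℝ)
    (hβ : β = (((n : ℝ) + 1 / 2) ^ 2 - 3
        + Real.sqrt (9 * ((n : ℝ) + 1 / 2) ^ 4 - 14 * ((n : ℝ) + 1 / 2) ^ 2 + 9)) / 4)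
    (ha : a = (((n : ℝ) + 1 / 2) ^ 2 - β) / (2 * (n : ℝ) + 1)) :
    {f : ℝ → ℝ × ℝ | ContDiff ℝ 2 f ∧ (∀ t, f (t + 2 * Real.pi) = -f t) ∧
      ∀ t, (deriv (deriv f) t).1 = (2 * β + 3) * (f t).1 + 2 * (deriv f t).2 ∧
           (deriv (deriv f) t).2 = -β * (f t).2 - 2 * (deriv f t).1}
    = ↑(Submodule.span ℝ
        {(fun t : ℝ => (a * Real.sin (((n : ℝ) + 1 / 2) * t), Real.cos (((n : ℝ) + 1 / 2) * t))),
         (fun t : ℝ => (a * Real.cos (((n : ℝ) + 1 / 2) * t), -Real.sin (((n : ℝ) + 1 / 2) * t)))}) := by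
  have hn1 : (1:ℝ) ≤ (n:ℝ) := by exact_mod_cast hn
  set ω : ℝ := (n : ℝ) + 1/2 with hω
  clear_value ω
  have hωge : (3/2 : ℝ) ≤ ω := by rw [hω]; linarith
  have hωpos : (0:ℝ) < ω := by linarith
  have hω2 : (9/4:ℝ) ≤ ω^2 := aux_sq ω hωge
  have hD : 0 ≤ 9*ω^4 - 14*ω^2 + 9 := aux_D ω hωge
  set s : ℝ := Real.sqrt (9*ω^4 - 14*ω^2 + 9) with hs
  have hs0 : 0 ≤ s := Real.sqrt_nonneg _
  have hs2 : s^2 = 9*ω^4 - 14*ω^2 + 9 := Real.sq_sqrt hD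
  clear_value s
  have hβs : β = (ω^2 - 3 + s)/4 := hβ
  have h4 : 4*β + 3 - ω^2 = s := by rw [hβs]; ring
  have hpoly : 2*β^2 + (3-ω^2)*β + ω^2 - ω^4 = 0 := by
    linear_combination ((4*β+3-ω^2+s)/8) * h4 + (1/8)*hs2
  have hβpos : 0 < β := aux_beta_pos ω s β hωge hs0 hs2 hβs
  have hr2pos : 0 < β - 1 + ω^2 := by linarith
  set r : ℝ := Real.sqrt (β - 1 + ω^2) with hrdef
  have hrpos : 0 < r := Real.sqrt_pos.mpr hr2pos
  have hr2 : r^2 = β - 1 + ω^2 := Real.sq_sqrt hr2pos.le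
  clear_value r
  have hrne : r ≠ 0 := ne_of_gt hrpos
  set q : ℝ := r^2 - 2*β - 3 with hqdef
  clear_value q
  have hq3 : q = ω^2 - β - 4 := by rw [hqdef, hr2]; ring
  have h2n : 2*(n:ℝ)+1 = 2*ω := by rw [hω]; ring
  have hω0 : (2:ℝ)*ω ≠ 0 := by positivity
  rw [h2n] at ha
  have ha2 : 2*ω*a = ω^2 - β := by rw [ha]; field_simp
  have haω : a*ω = (ω^2 - β)/2 := by linarith
  have h1 : a*(ω^2+2*β+3) = 2*ω := by
    have key : 2*ω*(a*(ω^2+2*β+3)) = 2*ω*(2*ω) := by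
      linear_combination (ω^2+2*β+3)*ha2 - hpoly
    exact mul_left_cancel₀ hω0 key
  have h2 : ω^2 = β + 2*a*ω := by linarith
  have hUPx : (2*r)*r^2 = (2*β+3)*(2*r) + 2*(q*r) := by rw [hqdef]; ring
  have hUPy : q*r^2 = -β*q - 2*((2*r)*r) := by
    rw [hq3]; linear_combination (ω^2-β)*hr2 - hpoly
  have hUMx : (-(2*r))*(-r)^2 = (2*β+3)*(-(2*r)) + 2*(q*(-r)) := by rw [hqdef]; ring
  have hUMy : q*(-r)^2 = -β*q - 2*((-(2*r))*(-r)) := by linear_combination hUPy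
  have hΔ₂pos : 0 < a*q + 2*ω := by
    refine aux_delta2_pos ω β a q hωge ?_
    linear_combination q*ha2 + (ω^2-β)*hq3
  have hΔ₂ : a*q + 2*ω ≠ 0 := ne_of_gt hΔ₂pos
  have h2T : 2*r^2 - (a*ω)*q = (8*ω^2 - 4 - (ω^2-β)^2)/2 := by
    rw [haω, hq3, hr2]; ring
  have hX : ω^2 - β = (3*ω^2+3-s)/4 := by rw [hβs]; ring
  have hΔ₁ : 2*r^2 - (a*ω)*q ≠ 0 := by
    rw [h2T, hX]
    intro hcon
    rcases eq_or_lt_of_le hn with hn2 | hn2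
    · have hω32 : ω = 3/2 := by rw [hω, ← hn2]; norm_num
      rw [hω32] at hs2 hcon
      exact aux_n1 s hs0 hs2 hcon
    · have hn2' : (2:ℝ) ≤ (n:ℝ) := by exact_mod_cast hn2
      have hu : (25/4:ℝ) ≤ ω^2 := by rw [hω]; exact aux_sq25 _ hn2'
      exact aux_n2 ω s hu hs0 hs2 hcon
  -- anti-periodicity of the generators
  have hsin_ap : ∀ x : ℝ, Real.sin (ω*(x + 2*Real.pi)) = -Real.sin (ω*x) := by
    intro x
    have hrew : ω*(x + 2*Real.pi) = (ω*x + Real.pi) + (n:ℝ)*(2*Real.pi) := by rw [hω]; ring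
    rw [hrew]
    rw [show ((n:ℝ)*(2*Real.pi)) = ((n:ℕ):ℝ)*(2*Real.pi) by norm_num]
    rw [Real.sin_add_nat_mul_two_pi, Real.sin_add_pi]
  have hcos_ap : ∀ x : ℝ, Real.cos (ω*(x + 2*Real.pi)) = -Real.cos (ω*x) := by
    intro x
    have hrew : ω*(x + 2*Real.pi) = (ω*x + Real.pi) + (n:ℝ)*(2*Real.pi) := by rw [hω]; ring
    rw [hrew]
    rw [show ((n:ℝ)*(2*Real.pi)) = ((n:ℕ):ℝ)*(2*Real.pi) by norm_num]
    rw [Real.cos_add_nat_mul_two_pi, Real.cos_add_pi]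
  apply Set.eq_of_subset_of_subset
  · -- solutions are in the span
    rintro f ⟨hc, hap, heqn⟩
    have hsplit := contDiff_succ_iff_deriv.mp (show ContDiff ℝ (1+1) f by norm_num at hc ⊢; exact hc)
    have hf1 : Differentiable ℝ f := hsplit.1
    have hdf1 : Differentiable ℝ (deriv f) := hsplit.2.2.differentiable (by norm_num)
    set F : ℝ → (ℝ×ℝ)×(ℝ×ℝ) := fun t => (f t, deriv f t) with hF
    have hFd : ∀ t, HasDerivAt F (eulerL β (F t)) t := by
      intro t
      have h := ((hf1 t).hasDerivAt).prodMk ((hdf1 t).hasDerivAt)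
      convert h using 1
      rw [eulerL_apply]
      exact Prod.ext rfl (Prod.ext (heqn t).1.symm (heqn t).2.symm)
    set x0 : ℝ := (f 0).1 with hx0
    set y0 : ℝ := (f 0).2 with hy0
    set x1 : ℝ := (deriv f 0).1 with hx1
    set y1 : ℝ := (deriv f 0).2 with hy1
    set c1 : ℝ := (2*r^2*y0 - q*x1)/(2*r^2 - (a*ω)*q) with hc1
    set Cc : ℝ := (x1 - (a*ω)*y0)/(2*r^2 - (a*ω)*q) with hCc
    set c2 : ℝ := (q*x0 - 2*y1)/(a*q + 2*ω) with hc2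
    set Dd : ℝ := (a*y1 + ω*x0)/(r*(a*q + 2*ω)) with hDd
    set c3 : ℝ := (Cc+Dd)/2 with hc3
    set c4 : ℝ := (Cc-Dd)/2 with hc4
    set G : ℝ → (ℝ×ℝ)×(ℝ×ℝ) := fun t =>
      c1 • U1 a ω t + c2 • U2 a ω t + c3 • UE (2*r) q r t + c4 • UE (-(2*r)) q (-r) t with hG
    have hGd : ∀ t, HasDerivAt G (eulerL β (G t)) t := by
      intro t
      have h := ((((hd_U1 h1 h2 t).const_smul c1).add ((hd_U2 h1 h2 t).const_smul c2)).add
        ((hd_UE hUPx hUPy t).const_smul c3)).add ((hd_UE hUMx hUMy t).const_smul c4)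
      convert h using 1
      · rfl
      · rfl
      · rfl
      · rfl
      rw [hG]
      simp only [map_add, map_smul]
    have hF0 : F 0 = G 0 := by
      have e1 : f 0 = (x0, y0) := by rw [hx0, hy0]
      have e2 : deriv f 0 = (x1, y1) := by rw [hx1, hy1]
      simp only [hF, hG, e1, e2, U1, U2, UE, mul_zero, Real.sin_zero, Real.cos_zero,
        Real.exp_zero, mul_one, Prod.smul_mk, Prod.mk_add_mk, smul_eq_mul, Prod.mk.injEq]
      have hΔ₁' : 2*r^2 - q*a*ω ≠ 0 := by intro h0; apply hΔ₁; linear_combination h0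
      have hΔ₂' : q*a + 2*ω ≠ 0 := by intro h0; apply hΔ₂; linear_combination h0
      refine ⟨⟨?_, ?_⟩, ?_, ?_⟩
      · rw [hc2, hc3, hc4, hCc, hDd]; field_simp; ring
      · rw [hc1, hc3, hc4, hCc, hDd]; field_simp; ring
      · rw [hc1, hc3, hc4, hCc, hDd]; field_simp; ring
      · rw [hc2, hc3, hc4, hCc, hDd]; field_simp; ring
    have hFG : ∀ t, F t = G t :=
      fun t => ODE_unique_global (eulerL β).lipschitz hFd hGd hF0 t
    -- anti-periodicity kills the exponential modes
    have hap0 : f (2*Real.pi) = -f 0 := by have h := hap 0; rwa [zero_add] at h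
    have hapd : deriv f (2*Real.pi) = -(deriv f 0) := by
      have hfe : (fun t => f (t + 2*Real.pi)) = fun t => -f t := funext hap
      have hd1 := deriv_comp_add_const f (2*Real.pi) 0
      rw [hfe, zero_add] at hd1
      rw [← hd1, deriv.fun_neg]
    have hG2 : G (2*Real.pi) = -(G 0) := by
      rw [← hFG, ← hFG]
      simp only [hF, hap0, hapd, Prod.neg_mk]
    have hsin2 : Real.sin (ω*(2*Real.pi)) = 0 := by
      have := hsin_ap 0
      simpa using this
    have hcos2 : Real.cos (ω*(2*Real.pi)) = -1 := by
      have := hcos_ap 0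
      simpa using this
    set E1 : ℝ := Real.exp (r*(2*Real.pi)) with hE1
    set E2 : ℝ := Real.exp ((-r)*(2*Real.pi)) with hE2
    have hE1pos : 0 < E1 := Real.exp_pos _
    have hE2pos : 0 < E2 := Real.exp_pos _
    have hex : c3*(2*r)*E1 + c4*(-(2*r))*E2 = -(c3*(2*r)) - c4*(-(2*r)) := by
      have h := congrArg (fun p => p.1.1) hG2
      simp only [hG, U1, U2, UE, hsin2, hcos2, mul_zero, Real.sin_zero, Real.cos_zero,
        Real.exp_zero, mul_one, Prod.smul_mk, Prod.mk_add_mk, smul_eq_mul, Prod.fst_add,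
        Prod.fst_neg, Prod.snd_add, Prod.neg_mk, ← hE1, ← hE2] at h
      linarith [h]
    have hex' : c3*(2*r*r)*E1 + c4*((-(2*r))*(-r))*E2 = -(c3*(2*r*r)) - c4*((-(2*r))*(-r)) := by
      have h := congrArg (fun p => p.2.1) hG2
      simp only [hG, U1, U2, UE, hsin2, hcos2, mul_zero, Real.sin_zero, Real.cos_zero,
        Real.exp_zero, mul_one, Prod.smul_mk, Prod.mk_add_mk, smul_eq_mul, Prod.fst_add,
        Prod.fst_neg, Prod.snd_add, Prod.snd_neg, Prod.neg_mk, ← hE1, ← hE2] at h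
      linarith [h]
    have h2rne : (2*r : ℝ) ≠ 0 := by positivity
    have h2rrne : (2*r*r : ℝ) ≠ 0 := by positivity
    have k1 : c3*(E1+1) = c4*(E2+1) := by
      apply mul_left_cancel₀ h2rne
      linear_combination hex
    have k2 : c3*(E1+1) = -(c4*(E2+1)) := by
      apply mul_left_cancel₀ h2rrne
      linear_combination hex'
    have hc3z : c3 = 0 := by
      have hz : c3*(E1+1) = 0 := by linarith
      rcases mul_eq_zero.mp hz with h | h
      · exact h
      · linarith [hE1pos]
    have hc4z : c4 = 0 := by
      have hz : c4*(E2+1) = 0 := by rw [← k1, hc3z]; ring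
      rcases mul_eq_zero.mp hz with h | h
      · exact h
      · linarith [hE2pos]
    rw [SetLike.mem_coe, Submodule.mem_span_pair]
    refine ⟨c1, c2, ?_⟩
    funext t
    have h := congrArg Prod.fst (hFG t)
    simp only [hF] at h
    rw [Pi.add_apply, Pi.smul_apply, Pi.smul_apply, h]
    simp only [hG, hc3z, hc4z, zero_smul, add_zero, U1, U2, Prod.fst_add, Prod.smul_mk,
      Prod.mk_add_mk, smul_eq_mul]
  · -- the span consists of solutions
    intro g hg
    rw [SetLike.mem_coe, Submodule.mem_span_pair] at hg
    obtain ⟨cc, dd, hgdef⟩ := hg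
    set H : ℝ → (ℝ×ℝ)×(ℝ×ℝ) := fun t => cc • U1 a ω t + dd • U2 a ω t with hH
    have hHd : ∀ t, HasDerivAt H (eulerL β (H t)) t := by
      intro t
      have h := ((hd_U1 h1 h2 t).const_smul cc).add ((hd_U2 h1 h2 t).const_smul dd)
      convert h using 1
      · rfl
      · rfl
      · rfl
      · rfl
      rw [hH]
      simp only [map_add, map_smul]
    have hg1 : g = fun t => (H t).1 := by
      rw [← hgdef]
      funext t
      simp only [hH, U1, U2, Pi.add_apply, Pi.smul_apply, Prod.fst_add, Prod.smul_mk,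
        Prod.mk_add_mk, smul_eq_mul, Prod.smul_fst]
    have hDg : ∀ t, HasDerivAt g ((H t).2) t := by
      intro t
      rw [hg1]
      have h := hd_fst (hHd t)
      exact h
    have hdg : deriv g = fun t => (H t).2 := funext fun t => (hDg t).deriv
    have hDg2 : ∀ t, HasDerivAt (deriv g) ((eulerL β (H t)).2) t := by
      intro t
      rw [hdg]
      exact hd_snd (hHd t)
    have hddg : deriv (deriv g) = fun t => (eulerL β (H t)).2 :=
      funext fun t => (hDg2 t).deriv
    refine ⟨?_, ?_, ?_⟩
    · -- smoothness
      have hsin : ContDiff ℝ 2 (fun t : ℝ => Real.sin (ω*t)) :=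
        Real.contDiff_sin.comp (contDiff_const.mul contDiff_id)
      have hcos : ContDiff ℝ 2 (fun t : ℝ => Real.cos (ω*t)) :=
        Real.contDiff_cos.comp (contDiff_const.mul contDiff_id)
      have hc2d : ContDiff ℝ 2 (fun t : ℝ => (H t).1) := by
        have h1c : ContDiff ℝ 2 (fun t : ℝ =>
            (cc*(a * Real.sin (ω*t)) + dd*(a * Real.cos (ω*t)))) :=
          (contDiff_const.mul (contDiff_const.mul hsin)).add
            (contDiff_const.mul (contDiff_const.mul hcos))
        have h2c : ContDiff ℝ 2 (fun t : ℝ => (cc*Real.cos (ω*t) + dd*(-Real.sin (ω*t)))) :=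
          (contDiff_const.mul hcos).add (contDiff_const.mul hsin.neg)
        have hpr := h1c.prodMk h2c
        convert hpr using 1
        rfl
      rw [hg1]; exact hc2d
    · -- anti-periodicity
      intro t
      rw [hg1]
      have h1a := hsin_ap t
      have h2a := hcos_ap t
      simp only [hH, U1, U2, Pi.add_apply, Prod.fst_add, Prod.smul_mk, Prod.mk_add_mk,
        smul_eq_mul, h1a, h2a, Prod.neg_mk, Prod.fst_neg]
      simp only [Prod.mk.injEq, Prod.neg_mk]
      constructor <;> ring
    · -- the equations
      intro t
      rw [hddg, hdg, hg1]
      constructor <;> simp [eulerL_apply]
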